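/- For any θ₀ ∈ ℝ^p, P(1/4 ≤ n^{−1}·∑_{i=1}^n exp(X_iᵀθ₀) ≤ 2·exp(‖θ₀‖₂²)) ≥ 1 − 1/n − exp(−n/24). -/

import Mathlib

open MeasureTheory ProbabilityTheory Real

open scoped ENNReal NNReal


lemma gauss_pdf_shift (c x : ℝ) :
    Real.exp (c * x) * gaussianPDFReal 0 1 x = Real.exp (c^2/2) * gaussianPDFReal c 1 x := by
  simp only [gaussianPDFReal, NNReal.coe_one, mul_one, zero_sub, sub_zero]
  rw [mul_left_comm, mul_left_comm (Real.exp (c^2/2)), ← Real.exp_add, ← Real.exp_add]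
  ring_nf

lemma gauss_withDensity : gaussianReal 0 1
    = (volume : Measure ℝ).withDensity (fun x => ((gaussianPDFReal 0 1 x).toNNReal : ℝ≥0∞)) := by
  rw [gaussianReal_of_var_ne_zero 0 one_ne_zero, gaussianPDF_def]
  rfl

lemma integrable_exp_gauss (c : ℝ) :
    Integrable (fun x => Real.exp (c * x)) (gaussianReal 0 1) := by
  rw [gaussianReal_of_var_ne_zero 0 one_ne_zero, gaussianPDF_def,
    integrable_withDensity_iff (measurable_gaussianPDFReal 0 1).ennreal_ofReal
      (Filter.Eventually.of_forall fun _ => ENNReal.ofReal_lt_top)]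
  have : ∀ x, Real.exp (c * x) * (ENNReal.ofReal (gaussianPDFReal 0 1 x)).toReal
      = Real.exp (c^2/2) * gaussianPDFReal c 1 x := by
    intro x
    rw [ENNReal.toReal_ofReal (gaussianPDFReal_nonneg 0 1 x)]
    exact gauss_pdf_shift c x
  simp only [this]
  exact (integrable_gaussianPDFReal c 1).const_mul _

lemma integral_exp_gauss (c : ℝ) :
    ∫ x, Real.exp (c * x) ∂(gaussianReal 0 1) = Real.exp (c^2/2) := by
  rw [gauss_withDensity, integral_withDensity_eq_integral_smul
    ((measurable_gaussianPDFReal 0 1).real_toNNReal) (fun x => Real.exp (c * x))]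
  have : ∀ x, (gaussianPDFReal 0 1 x).toNNReal • Real.exp (c * x)
      = Real.exp (c^2/2) * gaussianPDFReal c 1 x := by
    intro x
    rw [NNReal.smul_def, Real.coe_toNNReal _ (gaussianPDFReal_nonneg 0 1 x), smul_eq_mul,
      mul_comm]
    exact gauss_pdf_shift c x
  simp only [this]
  rw [MeasureTheory.integral_const_mul, integral_gaussianPDFReal_eq_one c one_ne_zero, mul_one]


section
variable {ι : Type*} [Fintype ι] {E : Type*} [MeasurableSpace E] (μ : Measure E) [SigmaFinite μ]

lemma my_integral_pi_prod (f : ι → E → ℝ) :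
    ∫ x : ι → E, ∏ i, f i (x i) ∂(Measure.pi fun _ => μ) = ∏ i, ∫ x, f i x ∂μ := by
  letI : MeasureSpace E := ⟨μ⟩
  haveI : SigmaFinite (volume : Measure E) := ‹_›
  exact integral_fintype_prod_eq_prod f

lemma my_integrable_pi_prod (f : ι → E → ℝ) (hf : ∀ i, Integrable (f i) μ) :
    Integrable (fun x : ι → E => ∏ i, f i (x i)) (Measure.pi fun _ => μ) := by
  letI : MeasureSpace E := ⟨μ⟩
  haveI : SigmaFinite (volume : Measure E) := ‹_›
  exact Integrable.fintype_prod hf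

end


section
variable {ι : Type*} [Fintype ι] [DecidableEq ι] {E : Type*} [MeasurableSpace E] (μ : Measure E)
  [IsProbabilityMeasure μ]

lemma my_integral_pi_single (i : ι) (f : E → ℝ) :
    ∫ x : ι → E, f (x i) ∂(Measure.pi fun _ => μ) = ∫ x, f x ∂μ := by
  have h1 : ∀ x : ι → E, f (x i) = ∏ l, (if i = l then f (x l) else 1) := by
    intro x; rw [Finset.prod_ite_eq]; simp
  simp_rw [h1]
  rw [my_integral_pi_prod μ (fun l v => if i = l then f v else 1)]
  have h2 : ∀ l : ι, ∫ v, (if i = l then f v else 1) ∂μ = if i = l then ∫ v, f v ∂μ else 1 := by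
    intro l; by_cases h : i = l <;> simp [h]
  simp_rw [h2]
  rw [Finset.prod_ite_eq]; simp

lemma my_integral_pi_two (i k : ι) (hik : i ≠ k) (f g : E → ℝ) :
    ∫ x : ι → E, f (x i) * g (x k) ∂(Measure.pi fun _ => μ)
      = (∫ x, f x ∂μ) * ∫ x, g x ∂μ := by
  have h1 : ∀ x : ι → E, f (x i) * g (x k)
      = ∏ l, ((if i = l then f (x l) else 1) * (if k = l then g (x l) else 1)) := by
    intro x; rw [Finset.prod_mul_distrib, Finset.prod_ite_eq, Finset.prod_ite_eq]; simp
  simp_rw [h1]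
  rw [my_integral_pi_prod μ (fun l v => (if i = l then f v else 1) * (if k = l then g v else 1))]
  have h2 : ∀ l : ι, ∫ v, (if i = l then f v else 1) * (if k = l then g v else 1) ∂μ
      = (if i = l then ∫ v, f v ∂μ else 1) * (if k = l then ∫ v, g v ∂μ else 1) := by
    intro l
    by_cases h : i = l
    · have h' : ¬ k = l := fun hkl => hik (h.trans hkl.symm)
      simp [h, h']
    · by_cases h' : k = l <;> simp [h, h']
  simp_rw [h2]
  rw [Finset.prod_mul_distrib, Finset.prod_ite_eq, Finset.prod_ite_eq]; simp

lemma my_integrable_pi_single (i : ι) (f : E → ℝ) (hf : Integrable f μ) :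
    Integrable (fun x : ι → E => f (x i)) (Measure.pi fun _ => μ) := by
  have h1 : ∀ x : ι → E, f (x i) = ∏ l, (if i = l then f (x l) else 1) := by
    intro x; rw [Finset.prod_ite_eq]; simp
  simp_rw [h1]
  refine my_integrable_pi_prod μ (fun l v => if i = l then f v else 1) (fun l => ?_)
  by_cases h : i = l <;> simp [h, hf]

lemma my_integrable_pi_two (i k : ι) (hik : i ≠ k) (f g : E → ℝ)
    (hf : Integrable f μ) (hg : Integrable g μ) :
    Integrable (fun x : ι → E => f (x i) * g (x k)) (Measure.pi fun _ => μ) := by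
  have h1 : ∀ x : ι → E, f (x i) * g (x k)
      = ∏ l, ((if i = l then f (x l) else 1) * (if k = l then g (x l) else 1)) := by
    intro x; rw [Finset.prod_mul_distrib, Finset.prod_ite_eq, Finset.prod_ite_eq]; simp
  simp_rw [h1]
  refine my_integrable_pi_prod μ
    (fun l v => (if i = l then f v else 1) * (if k = l then g v else 1)) (fun l => ?_)
  by_cases h : i = l <;> by_cases h' : k = l
  · exact absurd (h.trans h'.symm) hik
  · simp [h, h', hf]
  · simp [h, h', hg]
  · simp [h, h']
end


section Nu
variable {p : ℕ} (θ : Fin p → ℝ)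

local notation "ν" => (Measure.pi fun _ : Fin p => gaussianReal 0 1)

lemma measurable_S : Measurable (fun y : Fin p → ℝ => ∑ j, y j * θ j) :=
  Finset.measurable_sum _ fun j _ => (measurable_pi_apply j).mul_const _

lemma exp_smul_eq_prod (t : ℝ) (y : Fin p → ℝ) :
    Real.exp (t * ∑ j, y j * θ j) = ∏ j, Real.exp ((t * θ j) * y j) := by
  rw [← Real.exp_sum]
  congr 1
  rw [Finset.mul_sum]
  exact Finset.sum_congr rfl fun j _ => by ring

lemma integrable_expS (t : ℝ) :
    Integrable (fun y : Fin p → ℝ => Real.exp (t * ∑ j, y j * θ j)) ν := by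
  simp_rw [exp_smul_eq_prod θ t]
  exact my_integrable_pi_prod _ _ fun j => integrable_exp_gauss _

lemma integral_expS (t : ℝ) :
    ∫ y, Real.exp (t * ∑ j, y j * θ j) ∂ν = Real.exp (t^2 * (∑ j, θ j ^ 2) / 2) := by
  simp_rw [exp_smul_eq_prod θ t]
  rw [my_integral_pi_prod (gaussianReal 0 1) (fun j v => Real.exp ((t * θ j) * v))]
  have : ∀ j : Fin p, ∫ x : ℝ, Real.exp ((t * θ j) * x) ∂(gaussianReal 0 1)
      = Real.exp ((t * θ j)^2/2) := fun j => integral_exp_gauss _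
  simp_rw [this, ← Real.exp_sum]
  congr 1
  rw [Finset.mul_sum, Finset.sum_div]
  exact Finset.sum_congr rfl fun j _ => by ring

lemma neg_measurePreserving :
    MeasurePreserving (fun y : Fin p → ℝ => fun i => -(y i)) ν ν := by
  refine measurePreserving_pi _ _ fun i => ⟨measurable_neg, ?_⟩
  have : (Neg.neg : ℝ → ℝ) = fun x : ℝ => (-1 : ℝ) * x := by funext x; ring
  rw [this, gaussianReal_map_const_mul]
  norm_num

lemma prob_S_nonneg : (1 : ℝ) / 2 ≤ ((ν) {y | 0 ≤ ∑ j, y j * θ j}).toReal := by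
  set S₀ : Set (Fin p → ℝ) := {y | 0 ≤ ∑ j, y j * θ j} with hS₀
  have hmeas : MeasurableSet S₀ := measurableSet_le measurable_const (measurable_S θ)
  have hneg : (ν) {y | ∑ j, y j * θ j ≤ 0} = (ν) S₀ := by
    have hpre : (fun y : Fin p → ℝ => fun i => -(y i)) ⁻¹' S₀
        = {y | ∑ j, y j * θ j ≤ 0} := by
      ext y
      simp only [Set.mem_preimage, hS₀, Set.mem_setOf_eq, Set.mem_setOf_eq]
      rw [show ∑ j, -(y j) * θ j = -∑ j, y j * θ j by
        rw [← Finset.sum_neg_distrib]; exact Finset.sum_congr rfl fun j _ => by ring]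
      constructor <;> intro h <;> linarith
    rw [← hpre, (neg_measurePreserving).measure_preimage hmeas.nullMeasurableSet]
  have hunion : (1 : ℝ≥0∞) ≤ (ν) S₀ + (ν) {y | ∑ j, y j * θ j ≤ 0} := by
    have : (Set.univ : Set (Fin p → ℝ)) ⊆ S₀ ∪ {y | ∑ j, y j * θ j ≤ 0} := by
      intro y _
      rcases le_total 0 (∑ j, y j * θ j) with h | h
      · exact Or.inl h
      · exact Or.inr h
    calc (1 : ℝ≥0∞) = (ν) Set.univ := (measure_univ).symm
      _ ≤ (ν) (S₀ ∪ {y | ∑ j, y j * θ j ≤ 0}) := measure_mono this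
      _ ≤ _ := measure_union_le _ _
  rw [hneg, ← two_mul] at hunion
  have h2 : (1 : ℝ≥0∞).toReal ≤ ((2 : ℝ≥0∞) * (ν) S₀).toReal :=
    ENNReal.toReal_mono (by finiteness) hunion
  rw [ENNReal.toReal_mul] at h2
  simp only [ENNReal.toReal_one, ENNReal.toReal_ofNat] at h2
  linarith

end Nu


section Helpers

lemma markov_ofReal {α : Type*} [MeasurableSpace α] {μ : Measure α} [IsFiniteMeasure μ]
    {f : α → ℝ} (hf : Integrable f μ) (h0 : ∀ x, 0 ≤ f x) {c M : ℝ} (hc : 0 < c)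
    (hM : ∫ x, f x ∂μ ≤ M) : μ {x | c ≤ f x} ≤ ENNReal.ofReal (M / c) := by
  have hm := mul_meas_ge_le_integral_of_nonneg (Filter.Eventually.of_forall h0) hf c
  have ht : (μ {x | c ≤ f x}).toReal ≤ M / c := by
    rw [le_div_iff₀ hc]
    rw [measureReal_def] at hm
    nlinarith [hm, le_trans hm hM]
  calc μ {x | c ≤ f x} = ENNReal.ofReal ((μ {x | c ≤ f x}).toReal) :=
        (ENNReal.ofReal_toReal (by finiteness)).symm
    _ ≤ ENNReal.ofReal (M / c) := ENNReal.ofReal_le_ofReal ht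

lemma numeric_base : (3/4 : ℝ) * 2 ^ ((1:ℝ)/4) ≤ Real.exp (-(1:ℝ)/24) := by
  have h2 : (0:ℝ) ≤ 2 := by norm_num
  refine le_of_pow_le_pow_left₀ (n := 24) (by norm_num) (Real.exp_pos _).le ?_
  have hL : ((3/4 : ℝ) * 2 ^ ((1:ℝ)/4)) ^ (24:ℕ) = (3/4:ℝ)^(24:ℕ) * 64 := by
    rw [mul_pow]
    congr 1
    rw [← Real.rpow_natCast ((2:ℝ) ^ ((1:ℝ)/4)) 24, ← Real.rpow_mul h2]
    norm_num
  have hR : (Real.exp (-(1:ℝ)/24)) ^ (24:ℕ) = Real.exp (-1) := by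
    rw [← Real.exp_nat_mul]
    norm_num
  rw [hL, hR, Real.exp_neg, inv_eq_one_div, le_div_iff₀ (Real.exp_pos 1)]
  have he := Real.exp_one_lt_d9
  nlinarith [Real.exp_pos 1]

lemma numeric_bound (n : ℕ) :
    (3/4 : ℝ)^n * 2 ^ ((n:ℝ)/4) ≤ Real.exp (-(n:ℝ)/24) := by
  have h2 : (0:ℝ) ≤ 2 := by norm_num
  have e1 : (2:ℝ) ^ ((n:ℝ)/4) = ((2:ℝ) ^ ((1:ℝ)/4))^n := by
    rw [show (n:ℝ)/4 = (1/4) * n by ring, Real.rpow_mul h2, Real.rpow_natCast]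
  have e2 : Real.exp (-(n:ℝ)/24) = (Real.exp (-(1:ℝ)/24))^n := by
    rw [← Real.exp_nat_mul]
    congr 1
    ring
  rw [e1, e2, ← mul_pow]
  exact pow_le_pow_left₀ (by positivity) numeric_base n

end Helpers


/-- The law of an `n × p` matrix with i.i.d. standard normal entries. -/
noncomputable def gaussMat (n p : ℕ) : Measure (Fin n → Fin p → ℝ) :=
  Measure.pi fun _ : Fin n => Measure.pi fun _ : Fin p => gaussianReal 0 1

/-- concentration of the empirical mean of log-normal variables. -/
theorem stmt_11 (n p : ℕ) (hn : 1 ≤ n) (hp : 1 ≤ p) (θ₀ : Fin p → ℝ) :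
    1 - ENNReal.ofReal (1 / n + Real.exp (-(n : ℝ) / 24)) ≤
      gaussMat n p {x |
        1 / 4 ≤ (n : ℝ)⁻¹ * ∑ i, Real.exp (∑ j, x i j * θ₀ j) ∧
        (n : ℝ)⁻¹ * ∑ i, Real.exp (∑ j, x i j * θ₀ j) ≤ 2 * Real.exp (∑ j, θ₀ j ^ 2)} := by
  classical
  have hn0 : (0:ℝ) < n := by exact_mod_cast Nat.pos_of_ne_zero (by omega)
  set σ2 : ℝ := ∑ j, θ₀ j ^ 2 with hσ2def
  have hσ2nn : 0 ≤ σ2 := Finset.sum_nonneg fun j _ => sq_nonneg _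
  set ν : Measure (Fin p → ℝ) := Measure.pi fun _ : Fin p => gaussianReal 0 1 with hνdef
  have hgm : gaussMat n p = Measure.pi fun _ : Fin n => ν := rfl
  haveI : IsProbabilityMeasure ν := by rw [hνdef]; infer_instance
  haveI hPμ : IsProbabilityMeasure (gaussMat n p) := by rw [hgm]; infer_instance
  set g : (Fin p → ℝ) → ℝ := fun y => Real.exp (∑ j, y j * θ₀ j) with hgdef
  -- moments
  have hm1 : ∫ y, g y ∂ν = Real.exp (σ2 / 2) := by
    have h := integral_expS θ₀ 1
    simpa using h
  have hgint : Integrable g ν := by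
    have h := integrable_expS θ₀ 1
    simpa using h
  have hgsq : ∀ y, g y ^ 2 = Real.exp (2 * ∑ j, y j * θ₀ j) := by
    intro y; rw [hgdef]; rw [sq, ← Real.exp_add, two_mul]
  have hm2 : ∫ y, g y ^ 2 ∂ν = Real.exp (2 * σ2) := by
    simp_rw [hgsq]
    rw [integral_expS θ₀ 2]
    congr 1; ring
  have hg2int : Integrable (fun y => g y ^ 2) ν :=
    (integrable_expS θ₀ 2).congr (Filter.Eventually.of_forall fun y => (hgsq y).symm)
  -- centered variable
  set f' : (Fin p → ℝ) → ℝ := fun y => g y - Real.exp (σ2/2) with hf'def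
  have hf'int : Integrable f' ν := hgint.sub (integrable_const _)
  have hf'mean : ∫ y, f' y ∂ν = 0 := by
    rw [hf'def]
    rw [integral_sub hgint (integrable_const _), hm1, integral_const]
    simp
  have hf'sq_eq : ∀ y, f' y ^ 2 = g y ^ 2 - (2 * Real.exp (σ2/2)) * g y + Real.exp (σ2/2)^2 := by
    intro y; rw [hf'def]; ring
  have hf'sqint : Integrable (fun y => f' y ^ 2) ν := by
    have : Integrable (fun y => g y ^ 2 - (2 * Real.exp (σ2/2)) * g y + Real.exp (σ2/2)^2) ν :=
      (hg2int.sub (hgint.const_mul _)).add (integrable_const _)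
    exact this.congr (Filter.Eventually.of_forall fun y => (hf'sq_eq y).symm)
  have hI1 : Integrable (fun y => g y ^ 2 - 2 * Real.exp (σ2/2) * g y) ν := by
    exact hg2int.sub (hgint.const_mul _)
  have hI2 : Integrable (fun y => 2 * Real.exp (σ2/2) * g y) ν := hgint.const_mul _
  have hf'sqval : ∫ y, f' y ^ 2 ∂ν ≤ Real.exp (2*σ2) := by
    simp_rw [hf'sq_eq]
    rw [integral_add hI1 (integrable_const _),
      integral_sub hg2int hI2, integral_const_mul, hm1, hm2, integral_const]
    simp only [measure_univ, probReal_univ, ENNReal.toReal_one, one_smul, smul_eq_mul]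
    nlinarith [sq_nonneg (Real.exp (σ2/2))]
  -- variance of the sum
  have hterm_int : ∀ i k : Fin n,
      Integrable (fun x : Fin n → Fin p → ℝ => f' (x i) * f' (x k))
        (Measure.pi fun _ : Fin n => ν) := by
    intro i k
    by_cases hik : i = k
    · subst hik
      have := my_integrable_pi_single ν i (fun y => f' y ^ 2) hf'sqint
      exact this.congr (Filter.Eventually.of_forall fun x => by dsimp only; rw [sq])
    · exact my_integrable_pi_two ν i k hik f' f' hf'int hf'int
  have hexpand : ∀ x : Fin n → Fin p → ℝ,
      (∑ i, f' (x i)) ^ 2 = ∑ i, ∑ k, f' (x i) * f' (x k) := by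
    intro x; rw [sq, Finset.sum_mul_sum]
  have hDint : Integrable (fun x : Fin n → Fin p → ℝ => (∑ i, f' (x i))^2)
      (Measure.pi fun _ : Fin n => ν) := by
    simp_rw [hexpand]
    exact integrable_finset_sum _ fun i _ => integrable_finset_sum _ fun k _ => hterm_int i k
  have hDval : ∫ x, (∑ i, f' (x i))^2 ∂(Measure.pi fun _ : Fin n => ν)
      ≤ n * Real.exp (2*σ2) := by
    simp_rw [hexpand]
    rw [integral_finset_sum _ fun i _ => integrable_finset_sum _ fun k _ => hterm_int i k]
    have hrow : ∀ i : Fin n,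
        ∫ x, (∑ k, f' (x i) * f' (x k)) ∂(Measure.pi fun _ : Fin n => ν)
          = ∫ y, f' y ^ 2 ∂ν := by
      intro i
      rw [integral_finset_sum _ fun k _ => hterm_int i k]
      rw [Finset.sum_eq_single i]
      · rw [← my_integral_pi_single ν i (fun y => f' y ^ 2)]
        congr 1
        funext x
        rw [sq]
      · intro k _ hk
        rw [my_integral_pi_two ν i k (Ne.symm hk) f' f', hf'mean, zero_mul]
      · intro hi; exact absurd (Finset.mem_univ i) hi
    simp_rw [hrow]
    rw [Finset.sum_const, Finset.card_univ, Fintype.card_fin, nsmul_eq_mul]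
    exact mul_le_mul_of_nonneg_left hf'sqval (by positivity)
  -- upper tail
  have hB : (gaussMat n p) {x | ((n:ℝ) * Real.exp σ2)^2 ≤ (∑ i, f' (x i))^2}
      ≤ ENNReal.ofReal (1/n) := by
    rw [hgm]
    have hc : (0:ℝ) < ((n:ℝ) * Real.exp σ2)^2 := by positivity
    refine le_trans (markov_ofReal hDint (fun x => sq_nonneg _) hc hDval)
      (le_of_eq (congrArg _ ?_))
    have he : Real.exp (2*σ2) = Real.exp σ2 * Real.exp σ2 := by
      rw [← Real.exp_add]; congr 1; ring
    rw [he]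
    field_simp
  -- lower tail
  set h : (Fin p → ℝ) → ℝ := fun y => if 0 ≤ ∑ j, y j * θ₀ j then (2⁻¹:ℝ) else 1 with hhdef
  have hS₀ : MeasurableSet {y : Fin p → ℝ | 0 ≤ ∑ j, y j * θ₀ j} :=
    measurableSet_le measurable_const (measurable_S θ₀)
  have hite : h = fun y =>
      1 - Set.indicator {y : Fin p → ℝ | 0 ≤ ∑ j, y j * θ₀ j} (fun _ => (2⁻¹:ℝ)) y := by
    funext y
    by_cases hy : 0 ≤ ∑ j, y j * θ₀ j <;>
      simp [hhdef, Set.indicator_apply, hy] <;> norm_num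
  have hhint : Integrable h ν := by
    rw [hite]
    exact (integrable_const 1).sub ((integrable_const (2⁻¹:ℝ)).indicator hS₀)
  have hhnn : ∀ y, 0 ≤ h y := by
    intro y; rw [hhdef]; dsimp only; split <;> norm_num
  have hhval : ∫ y, h y ∂ν ≤ 3/4 := by
    rw [hite, integral_sub (integrable_const 1) ((integrable_const _).indicator hS₀),
      integral_indicator_const _ hS₀, integral_const]
    have hq := prob_S_nonneg θ₀
    simp only [measure_univ, probReal_univ, measureReal_def, ENNReal.toReal_one, one_smul, smul_eq_mul]
    rw [← hνdef] at hq
    nlinarith [hq]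
  have hPint := my_integrable_pi_prod ν (fun _ : Fin n => h) (fun _ => hhint)
  have hPval : ∫ x, ∏ i : Fin n, h (x i) ∂(Measure.pi fun _ : Fin n => ν) ≤ (3/4:ℝ)^n := by
    rw [my_integral_pi_prod ν (fun _ : Fin n => h), Finset.prod_const, Finset.card_univ,
      Fintype.card_fin]
    exact pow_le_pow_left₀ (integral_nonneg hhnn) hhval n
  have hcpos : (0:ℝ) < 2 ^ (-(n:ℝ)/4) := Real.rpow_pos_of_pos (by norm_num) _
  have hA : (gaussMat n p) {x | (2:ℝ)^(-(n:ℝ)/4) ≤ ∏ i, h (x i)}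
      ≤ ENNReal.ofReal (Real.exp (-(n:ℝ)/24)) := by
    rw [hgm]
    refine le_trans (markov_ofReal hPint
      (fun x => Finset.prod_nonneg fun i _ => hhnn _) hcpos hPval)
      (ENNReal.ofReal_le_ofReal ?_)
    rw [div_eq_mul_inv, show (-(n:ℝ)/4) = -((n:ℝ)/4) from neg_div _ _,
      Real.rpow_neg (by norm_num : (0:ℝ) ≤ 2), inv_inv]
    exact numeric_bound n
  -- the good event and inclusion
  set G : Set (Fin n → Fin p → ℝ) := {x |
      1 / 4 ≤ (n : ℝ)⁻¹ * ∑ i, Real.exp (∑ j, x i j * θ₀ j) ∧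
      (n : ℝ)⁻¹ * ∑ i, Real.exp (∑ j, x i j * θ₀ j) ≤ 2 * Real.exp σ2} with hGdef
  have hFmeas : Measurable (fun x : Fin n → Fin p → ℝ =>
      (n:ℝ)⁻¹ * ∑ i, Real.exp (∑ j, x i j * θ₀ j)) := by
    apply Measurable.const_mul
    apply Finset.measurable_sum
    intro i _
    exact Real.measurable_exp.comp (Finset.measurable_sum _ fun j _ =>
      ((measurable_pi_apply j).comp (measurable_pi_apply i)).mul_const _)
  have hGmeas : MeasurableSet G :=
    (measurableSet_le measurable_const hFmeas).inter (measurableSet_le hFmeas measurable_const)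
  have hsub : Gᶜ ⊆ {x | ((n:ℝ) * Real.exp σ2)^2 ≤ (∑ i, f' (x i))^2}
      ∪ {x | (2:ℝ)^(-(n:ℝ)/4) ≤ ∏ i, h (x i)} := by
    intro x hx
    rw [hGdef] at hx
    simp only [Set.mem_compl_iff, Set.mem_setOf_eq, not_and_or, not_le] at hx
    rcases hx with hx | hx
    · -- lower tail: sum < n/4
      right
      simp only [Set.mem_setOf_eq]
      have hWlt : ∑ i, Real.exp (∑ j, x i j * θ₀ j) < (n:ℝ)/4 := by
        have h3 : (n:ℝ) * ((n:ℝ)⁻¹ * ∑ i, Real.exp (∑ j, x i j * θ₀ j))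
            = ∑ i, Real.exp (∑ j, x i j * θ₀ j) := by field_simp
        have h2 := (mul_lt_mul_of_pos_left hx hn0)
        rw [h3] at h2
        linarith
      set T := Finset.univ.filter (fun i : Fin n => 0 ≤ ∑ j, x i j * θ₀ j) with hT
      have hprod : ∏ i, h (x i) = (2⁻¹:ℝ)^(T.card) := by
        rw [hhdef]
        dsimp only
        rw [Finset.prod_ite, Finset.prod_const, Finset.prod_const_one, mul_one, hT]
      have hcard : (T.card : ℝ) < (n:ℝ)/4 := by
        have h1 : (T.card : ℝ) = ∑ _i ∈ T, (1:ℝ) := by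
          rw [Finset.sum_const]; simp
        have h2 : ∑ _i ∈ T, (1:ℝ) ≤ ∑ i ∈ T, Real.exp (∑ j, x i j * θ₀ j) :=
          Finset.sum_le_sum fun i hi => Real.one_le_exp (Finset.mem_filter.mp hi).2
        have h3 : ∑ i ∈ T, Real.exp (∑ j, x i j * θ₀ j)
            ≤ ∑ i, Real.exp (∑ j, x i j * θ₀ j) :=
          Finset.sum_le_sum_of_subset_of_nonneg (Finset.filter_subset _ _)
            (fun i _ _ => (Real.exp_pos _).le)
        linarith
      rw [hprod]
      have hpow : (2⁻¹:ℝ)^T.card = (2:ℝ) ^ (-(T.card:ℝ)) := by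
        rw [inv_pow, ← Real.rpow_natCast 2 T.card, ← Real.rpow_neg (by norm_num : (0:ℝ) ≤ 2)]
      rw [hpow]
      apply (Real.rpow_le_rpow_left_iff (by norm_num : (1:ℝ) < 2)).mpr
      linarith
    · -- upper tail
      left
      simp only [Set.mem_setOf_eq]
      have hW : (n:ℝ) * (2 * Real.exp σ2) < ∑ i, Real.exp (∑ j, x i j * θ₀ j) := by
        have h3 : (n:ℝ) * ((n:ℝ)⁻¹ * ∑ i, Real.exp (∑ j, x i j * θ₀ j))
            = ∑ i, Real.exp (∑ j, x i j * θ₀ j) := by field_simp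
        have h2 := (mul_lt_mul_of_pos_left hx hn0)
        rw [h3] at h2
        linarith
      have hsum : ∑ i, f' (x i)
          = (∑ i, Real.exp (∑ j, x i j * θ₀ j)) - n * Real.exp (σ2/2) := by
        rw [hf'def, hgdef]
        dsimp only
        rw [Finset.sum_sub_distrib, Finset.sum_const, Finset.card_univ, Fintype.card_fin,
          nsmul_eq_mul]
      have hee : Real.exp (σ2/2) ≤ Real.exp σ2 := Real.exp_le_exp.mpr (by linarith)
      have hge : (n:ℝ) * Real.exp σ2 ≤ ∑ i, f' (x i) := by
        rw [hsum]; nlinarith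
      exact pow_le_pow_left₀ (by positivity) hge 2
  -- assembly
  rw [tsub_le_iff_right]
  calc (1:ℝ≥0∞) = gaussMat n p Set.univ := measure_univ.symm
    _ = gaussMat n p G + gaussMat n p Gᶜ := (measure_add_measure_compl hGmeas).symm
    _ ≤ gaussMat n p G + ENNReal.ofReal (1/n + Real.exp (-(n:ℝ)/24)) := by
        refine add_le_add_right ?_ _
        refine le_trans (measure_mono hsub) (le_trans (measure_union_le _ _) ?_)
        rw [ENNReal.ofReal_add (by positivity) (by positivity)]
        exact add_le_add hB hA
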